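/- Assume p > q. For every 1 ≤ k ≤ p−q, the N-orbit of e_k is N(e_k) = { e_k + s_1 w_1 + ⋯ + s_q w_q : s_1, …, s_q ∈ ℝ }. -/

import Mathlib

open Matrix

noncomputable section

/-- 1-based standard basis vector `e i` of `ℝ^n` (zero if `i` is out of range). -/
def stdE (n i : ℕ) : Fin n → ℝ := fun j => if (j : ℕ) + 1 = i then 1 else 0

/-- `w i := e_{p-i+1} - e_{p+i}`. -/
def wVec (p q i : ℕ) : Fin (p + q) → ℝ := stdE (p + q) (p - i + 1) - stdE (p + q) (p + i)

/-- `v i := e_{p-i+1} + e_{p+i}`. -/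
def vVec (p q i : ℕ) : Fin (p + q) → ℝ := stdE (p + q) (p - i + 1) + stdE (p + q) (p + i)

/-- The scalar product of signature `(p,q)` on `ℝ^{p+q}`. -/
def ip (p q : ℕ) (x y : Fin (p + q) → ℝ) : ℝ :=
  ∑ i : Fin (p + q), (if (i : ℕ) < p then (1 : ℝ) else -1) * x i * y i

/-- The matrix `J = diag(I_p, -I_q)`. -/
def Jmat (p q : ℕ) : Matrix (Fin (p + q)) (Fin (p + q)) ℝ :=
  Matrix.diagonal (fun i => if (i : ℕ) < p then (1 : ℝ) else -1)

/-- Entry of a square matrix, with 1-based indices (0 outside the range). -/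
def ent {n : ℕ} (X : Matrix (Fin n) (Fin n) ℝ) (i j : ℕ) : ℝ :=
  if h : i - 1 < n ∧ j - 1 < n then X ⟨i - 1, h.1⟩ ⟨j - 1, h.2⟩ else 0

/-- Coordinate of a vector, with 1-based index (0 outside the range). -/
def vent {n : ℕ} (x : Fin n → ℝ) (i : ℕ) : ℝ :=
  if h : i - 1 < n then x ⟨i - 1, h⟩ else 0

lemma ent_zero {n : ℕ} (i j : ℕ) : ent (0 : Matrix (Fin n) (Fin n) ℝ) i j = 0 := by
  unfold ent; split <;> simp

lemma ent_add {n : ℕ} (X Y : Matrix (Fin n) (Fin n) ℝ) (i j : ℕ) :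
    ent (X + Y) i j = ent X i j + ent Y i j := by
  unfold ent; split <;> simp [Matrix.add_apply]

lemma ent_smul {n : ℕ} (c : ℝ) (X : Matrix (Fin n) (Fin n) ℝ) (i j : ℕ) :
    ent (c • X) i j = c * ent X i j := by
  unfold ent; split <;> simp [Matrix.smul_apply]

/-- The Lie algebra `𝔰𝔬(p,q)`, as a set of matrices. -/
def soSet (p q : ℕ) : Set (Matrix (Fin (p + q)) (Fin (p + q)) ℝ) :=
  {X | Xᵀ * Jmat p q + Jmat p q * X = 0}

lemma soSet_zero (p q : ℕ) : (0 : Matrix (Fin (p + q)) (Fin (p + q)) ℝ) ∈ soSet p q := by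
  simp [soSet]

lemma soSet_add (p q : ℕ) {X Y : Matrix (Fin (p + q)) (Fin (p + q)) ℝ}
    (hX : X ∈ soSet p q) (hY : Y ∈ soSet p q) : X + Y ∈ soSet p q := by
  simp only [soSet, Set.mem_setOf_eq] at *
  rw [Matrix.transpose_add, Matrix.add_mul, Matrix.mul_add,
    show Xᵀ * Jmat p q + Yᵀ * Jmat p q + (Jmat p q * X + Jmat p q * Y)
      = (Xᵀ * Jmat p q + Jmat p q * X) + (Yᵀ * Jmat p q + Jmat p q * Y) by abel,
    hX, hY, add_zero]

lemma soSet_smul (p q : ℕ) (c : ℝ) {X : Matrix (Fin (p + q)) (Fin (p + q)) ℝ}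
    (hX : X ∈ soSet p q) : c • X ∈ soSet p q := by
  simp only [soSet, Set.mem_setOf_eq] at *
  rw [Matrix.transpose_smul, Matrix.smul_mul, Matrix.mul_smul, ← smul_add, hX, smul_zero]

/-- The set `𝔭` of symmetric elements of `𝔰𝔬(p,q)` (Cartan decomposition). -/
def pSet (p q : ℕ) : Set (Matrix (Fin (p + q)) (Fin (p + q)) ℝ) :=
  {X | X ∈ soSet p q ∧ Xᵀ = X}

/-- The nilpotent Iwasawa factor `𝔫`, as a set of matrices; the conditions are the
entry conditions on the blocks `A`, `B`, `D` (1-based indices; `A i j = ent X i j`,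
`B i l = ent X i (p + l)`, `D i j = ent X (p + i) (p + j)`). -/
def nSet (p q : ℕ) : Set (Matrix (Fin (p + q)) (Fin (p + q)) ℝ) :=
  {X | X ∈ soSet p q ∧
    (∀ i j, 1 ≤ i → i ≤ p - q → 1 ≤ j → j ≤ p - q → ent X i j = 0) ∧
    (∀ l, 1 ≤ l → l ≤ q → ent X (p - l + 1) (p + l) = 0) ∧
    (∀ k l, 1 ≤ k → k ≤ p - q → 1 ≤ l → l ≤ q →
      ent X k (p - l + 1) = ent X k (p + l)) ∧
    (∀ i j, 1 ≤ i → i < j → j ≤ q →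
      ent X (p + 1 - j) (p + 1 - i) = ent X (p + 1 - j) (p + i)) ∧
    (∀ i j, 1 ≤ i → i < j → j ≤ q →
      ent X (p + i) (p + j) = - ent X (p + 1 - i) (p + j))}

/-- The abelian factor `𝔞`, as a set of matrices: all entries vanish except the
pairs in positions `(p-l+1, p+l)` and `(p+l, p-l+1)`, `1 ≤ l ≤ q`, which are equal. -/
def aSet (p q : ℕ) : Set (Matrix (Fin (p + q)) (Fin (p + q)) ℝ) :=
  {X | (∀ l, 1 ≤ l → l ≤ q → ent X (p - l + 1) (p + l) = ent X (p + l) (p - l + 1)) ∧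
    (∀ i j, 1 ≤ i → i ≤ p + q → 1 ≤ j → j ≤ p + q →
      (¬ ∃ l, 1 ≤ l ∧ l ≤ q ∧ ((i = p - l + 1 ∧ j = p + l) ∨ (i = p + l ∧ j = p - l + 1))) →
      ent X i j = 0)}

/-- `𝔨₀`: skew-symmetric upper-left `(p-q)×(p-q)` block, all other entries zero. -/
def kSet (p q : ℕ) : Set (Matrix (Fin (p + q)) (Fin (p + q)) ℝ) :=
  {X | (∀ i j, 1 ≤ i → i ≤ p - q → 1 ≤ j → j ≤ p - q → ent X i j = - ent X j i) ∧
    (∀ i j, 1 ≤ i → i ≤ p + q → 1 ≤ j → j ≤ p + q →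
      ¬(i ≤ p - q ∧ j ≤ p - q) → ent X i j = 0)}

/-- The nilpotent Iwasawa factor `𝔫` as an `ℝ`-subspace of `M_{p+q}(ℝ)`. -/
def nSub (p q : ℕ) : Submodule ℝ (Matrix (Fin (p + q)) (Fin (p + q)) ℝ) where
  carrier := nSet p q
  zero_mem' := by
    refine ⟨soSet_zero p q, ?_, ?_, ?_, ?_, ?_⟩ <;> intros <;> simp [ent_zero]
  add_mem' := by
    rintro X Y ⟨h0, h1, h2, h3, h4, h5⟩ ⟨g0, g1, g2, g3, g4, g5⟩
    refine ⟨soSet_add p q h0 g0, ?_, ?_, ?_, ?_, ?_⟩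
    · intro i j hi hi' hj hj'
      rw [ent_add, h1 i j hi hi' hj hj', g1 i j hi hi' hj hj', add_zero]
    · intro l hl hl'
      rw [ent_add, h2 l hl hl', g2 l hl hl', add_zero]
    · intro k l hk hk' hl hl'
      rw [ent_add, ent_add, h3 k l hk hk' hl hl', g3 k l hk hk' hl hl']
    · intro i j hi hij hj
      rw [ent_add, ent_add, h4 i j hi hij hj, g4 i j hi hij hj]
    · intro i j hi hij hj
      rw [ent_add, ent_add, h5 i j hi hij hj, g5 i j hi hij hj]; ring
  smul_mem' := by
    rintro c X ⟨h0, h1, h2, h3, h4, h5⟩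
    refine ⟨soSet_smul p q c h0, ?_, ?_, ?_, ?_, ?_⟩
    · intro i j hi hi' hj hj'
      rw [ent_smul, h1 i j hi hi' hj hj', mul_zero]
    · intro l hl hl'
      rw [ent_smul, h2 l hl hl', mul_zero]
    · intro k l hk hk' hl hl'
      rw [ent_smul, ent_smul, h3 k l hk hk' hl hl']
    · intro i j hi hij hj
      rw [ent_smul, ent_smul, h4 i j hi hij hj]
    · intro i j hi hij hj
      rw [ent_smul, ent_smul, h5 i j hi hij hj]; ring

/-- The abelian factor `𝔞` as an `ℝ`-subspace of `M_{p+q}(ℝ)`. -/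
def aSub (p q : ℕ) : Submodule ℝ (Matrix (Fin (p + q)) (Fin (p + q)) ℝ) where
  carrier := aSet p q
  zero_mem' := by
    refine ⟨?_, ?_⟩ <;> intros <;> simp [ent_zero]
  add_mem' := by
    rintro X Y ⟨h1, h2⟩ ⟨g1, g2⟩
    refine ⟨?_, ?_⟩
    · intro l hl hl'
      rw [ent_add, ent_add, h1 l hl hl', g1 l hl hl']
    · intro i j hi hi' hj hj' hne
      rw [ent_add, h2 i j hi hi' hj hj' hne, g2 i j hi hi' hj hj' hne, add_zero]
  smul_mem' := by
    rintro c X ⟨h1, h2⟩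
    refine ⟨?_, ?_⟩
    · intro l hl hl'
      rw [ent_smul, ent_smul, h1 l hl hl']
    · intro i j hi hi' hj hj' hne
      rw [ent_smul, h2 i j hi hi' hj hj' hne, mul_zero]

/-- `𝔨₀` as an `ℝ`-subspace of `M_{p+q}(ℝ)`. -/
def kSub (p q : ℕ) : Submodule ℝ (Matrix (Fin (p + q)) (Fin (p + q)) ℝ) where
  carrier := kSet p q
  zero_mem' := by
    refine ⟨?_, ?_⟩ <;> intros <;> simp [ent_zero]
  add_mem' := by
    rintro X Y ⟨h1, h2⟩ ⟨g1, g2⟩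
    refine ⟨?_, ?_⟩
    · intro i j hi hi' hj hj'
      rw [ent_add, ent_add, h1 i j hi hi' hj hj', g1 i j hi hi' hj hj']; ring
    · intro i j hi hi' hj hj' hne
      rw [ent_add, h2 i j hi hi' hj hj' hne, g2 i j hi hi' hj hj' hne, add_zero]
  smul_mem' := by
    rintro c X ⟨h1, h2⟩
    refine ⟨?_, ?_⟩
    · intro i j hi hi' hj hj'
      rw [ent_smul, ent_smul, h1 i j hi hi' hj hj']; ring
    · intro i j hi hi' hj hj' hne
      rw [ent_smul, h2 i j hi hi' hj hj' hne, mul_zero]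

/-- The subspace `{X ∈ M_n(ℝ) : X x = 0}`. -/
def kerAt {n : ℕ} (x : Fin n → ℝ) : Submodule ℝ (Matrix (Fin n) (Fin n) ℝ) where
  carrier := {X | X *ᵥ x = 0}
  zero_mem' := by simp [Matrix.zero_mulVec]
  add_mem' := by
    intro X Y hX hY
    simp only [Set.mem_setOf_eq] at *
    rw [Matrix.add_mulVec, hX, hY, add_zero]
  smul_mem' := by
    intro c X hX
    simp only [Set.mem_setOf_eq] at *
    rw [Matrix.smul_mulVec, hX, smul_zero]

/-- The exponential of a matrix, as a unit of `M_n(ℝ)`, i.e. an element of `GL(n, ℝ)`. -/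
def expUnit {n : ℕ} (X : Matrix (Fin n) (Fin n) ℝ) : (Matrix (Fin n) (Fin n) ℝ)ˣ where
  val := NormedSpace.exp X
  inv := NormedSpace.exp (-X)
  val_inv := by
    rw [← Matrix.exp_add_of_commute X (-X) (Commute.neg_right (Commute.refl X)),
      add_neg_cancel, NormedSpace.exp_zero]
  inv_val := by
    rw [← Matrix.exp_add_of_commute (-X) X (Commute.neg_left (Commute.refl X)),
      neg_add_cancel, NormedSpace.exp_zero]

/-- The subgroup `N = exp(𝔫)` of `GL(p+q, ℝ)` generated by exponentials of elements of `𝔫`. -/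
def Ngrp (p q : ℕ) : Subgroup (Matrix (Fin (p + q)) (Fin (p + q)) ℝ)ˣ :=
  Subgroup.closure {g | ∃ X ∈ nSet p q, g = expUnit X}

/-- The subgroup `AN` of `GL(p+q, ℝ)` generated by exponentials of elements of `𝔞 ∪ 𝔫`. -/
def ANgrp (p q : ℕ) : Subgroup (Matrix (Fin (p + q)) (Fin (p + q)) ℝ)ˣ :=
  Subgroup.closure {g | ∃ X ∈ aSet p q ∪ nSet p q, g = expUnit X}

/-- The subgroup `Q = K₀AN` of `GL(p+q, ℝ)` generated by exponentials of `𝔨₀ ∪ 𝔞 ∪ 𝔫`. -/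
def Qgrp (p q : ℕ) : Subgroup (Matrix (Fin (p + q)) (Fin (p + q)) ℝ)ˣ :=
  Subgroup.closure {g | ∃ X ∈ kSet p q ∪ aSet p q ∪ nSet p q, g = expUnit X}

/-- The orbit `G(x)` of a point `x ∈ ℝ^n` under a subgroup `G` of `GL(n, ℝ)`. -/
def orb {n : ℕ} (G : Subgroup (Matrix (Fin n) (Fin n) ℝ)ˣ) (x : Fin n → ℝ) :
    Set (Fin n → ℝ) :=
  {v | ∃ g ∈ G, (g : Matrix (Fin n) (Fin n) ℝ) *ᵥ x = v}

end

noncomputable section Aux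

open Finset

lemma ent_eq_apply {n : ℕ} (X : Matrix (Fin n) (Fin n) ℝ) (a b : Fin n) :
    ent X ((a : ℕ) + 1) ((b : ℕ) + 1) = X a b := by
  have ha : (a : ℕ) + 1 - 1 < n := by simpa using a.isLt
  have hb : (b : ℕ) + 1 - 1 < n := by simpa using b.isLt
  rw [ent, dif_pos ⟨ha, hb⟩]
  congr 1 <;> exact Fin.ext (by simp)

lemma wVec_apply (p q l : ℕ) (a : Fin (p + q)) :
    wVec p q l a
      = (if (a : ℕ) + 1 = p - l + 1 then (1 : ℝ) else 0)
        - (if (a : ℕ) + 1 = p + l then (1 : ℝ) else 0) := rfl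

lemma mulVec_stdE {n : ℕ} (X : Matrix (Fin n) (Fin n) ℝ) (i : ℕ) (h1 : 1 ≤ i) (h2 : i ≤ n)
    (a : Fin n) : (X *ᵥ stdE n i) a = ent X ((a : ℕ) + 1) i := by
  have hi : i - 1 < n := by omega
  have hent : ent X ((a : ℕ) + 1) i = X a ⟨i - 1, hi⟩ := by
    have := ent_eq_apply X a ⟨i - 1, hi⟩
    simpa [Nat.sub_add_cancel h1] using this
  rw [hent]
  simp only [Matrix.mulVec, dotProduct, stdE]
  rw [Finset.sum_eq_single (⟨i - 1, hi⟩ : Fin n)]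
  · simp [Nat.sub_add_cancel h1]
  · intro b _ hb
    have : ¬((b : ℕ) + 1 = i) := by
      intro h; apply hb; exact Fin.ext (show (b : ℕ) = i - 1 by omega)
    simp [this]
  · simp

lemma so_rel {p q : ℕ} {X : Matrix (Fin (p + q)) (Fin (p + q)) ℝ} (hX : X ∈ soSet p q)
    (i j : ℕ) (hi1 : 1 ≤ i) (hi2 : i ≤ p + q) (hj1 : 1 ≤ j) (hj2 : j ≤ p + q) :
    (if j ≤ p then (1 : ℝ) else -1) * ent X j i
      + (if i ≤ p then (1 : ℝ) else -1) * ent X i j = 0 := by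
  have hi : i - 1 < p + q := by omega
  have hj : j - 1 < p + q := by omega
  have h := congrFun (congrFun hX (⟨i - 1, hi⟩ : Fin (p + q))) (⟨j - 1, hj⟩ : Fin (p + q))
  simp only [Matrix.add_apply, Jmat, Matrix.mul_diagonal, Matrix.diagonal_mul,
    Matrix.transpose_apply, Matrix.zero_apply] at h
  have e1 : ent X j i = X ⟨j - 1, hj⟩ ⟨i - 1, hi⟩ := by
    have := ent_eq_apply X (⟨j - 1, hj⟩ : Fin (p + q)) (⟨i - 1, hi⟩ : Fin (p + q))
    simpa [Nat.sub_add_cancel hi1, Nat.sub_add_cancel hj1] using this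
  have e2 : ent X i j = X ⟨i - 1, hi⟩ ⟨j - 1, hj⟩ := by
    have := ent_eq_apply X (⟨i - 1, hi⟩ : Fin (p + q)) (⟨j - 1, hj⟩ : Fin (p + q))
    simpa [Nat.sub_add_cancel hi1, Nat.sub_add_cancel hj1] using this
  rw [e1, e2]
  have c1 : (j - 1 < p) ↔ (j ≤ p) := by omega
  have c2 : (i - 1 < p) ↔ (i ≤ p) := by omega
  simp only [c1, c2] at h ⊢
  linarith [h]

lemma so_skew_p {p q : ℕ} {X : Matrix (Fin (p + q)) (Fin (p + q)) ℝ} (hX : X ∈ soSet p q)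
    (i j : ℕ) (hi1 : 1 ≤ i) (hi2 : i ≤ p) (hj1 : 1 ≤ j) (hj2 : j ≤ p) (hqq : q ≤ p) :
    ent X i j = - ent X j i := by
  have h := so_rel hX i j hi1 (by omega) hj1 (by omega)
  rw [if_pos hj2, if_pos hi2] at h; linarith

lemma so_mix {p q : ℕ} {X : Matrix (Fin (p + q)) (Fin (p + q)) ℝ} (hX : X ∈ soSet p q)
    (i j : ℕ) (hi1 : 1 ≤ i) (hi2 : i ≤ p) (hj1 : p + 1 ≤ j) (hj2 : j ≤ p + q) :
    ent X i j = ent X j i := by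
  have h := so_rel hX i j hi1 (by omega) (by omega) hj2
  rw [if_neg (by omega), if_pos hi2] at h; linarith

lemma so_skew_q {p q : ℕ} {X : Matrix (Fin (p + q)) (Fin (p + q)) ℝ} (hX : X ∈ soSet p q)
    (i j : ℕ) (hi1 : p + 1 ≤ i) (hi2 : i ≤ p + q) (hj1 : p + 1 ≤ j) (hj2 : j ≤ p + q) :
    ent X i j = - ent X j i := by
  have h := so_rel hX i j (by omega) hi2 (by omega) hj2
  rw [if_neg (by omega), if_neg (by omega)] at h; linarith



lemma lemA {p q : ℕ} (hq : 1 ≤ q) (hpq : q < p) {X : Matrix (Fin (p + q)) (Fin (p + q)) ℝ}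
    (hX : X ∈ nSet p q) (k : ℕ) (hk1 : 1 ≤ k) (hk2 : k ≤ p - q) :
    X *ᵥ stdE (p + q) k = ∑ l ∈ Finset.Icc 1 q, (- ent X k (p + l)) • wVec p q l := by
  obtain ⟨h0, h1, h2, h3, h4, h5⟩ := hX
  funext a
  rw [mulVec_stdE X k hk1 (by omega) a, Finset.sum_apply]
  simp only [Pi.smul_apply, smul_eq_mul, wVec_apply]
  rcases lt_or_ge ((a : ℕ) + 1) (p - q + 1) with hc | hc
  · -- a+1 ≤ p - q
    rw [h1 ((a : ℕ) + 1) k (by omega) (by omega) hk1 hk2]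
    rw [Finset.sum_eq_zero]
    intro l hl
    simp only [Finset.mem_Icc] at hl
    rw [if_neg (by omega), if_neg (by omega)]
    ring
  · rcases lt_or_ge (p : ℕ) ((a : ℕ) + 1) with hc2 | hc2
    · -- a+1 = p + l0
      set l0 : ℕ := (a : ℕ) + 1 - p with hl0
      have hl0r : 1 ≤ l0 ∧ l0 ≤ q := by
        constructor <;> [omega; (have := a.isLt; omega)]
      rw [Finset.sum_eq_single l0]
      · rw [if_neg (by omega), if_pos (by omega)]
        have e1 : ent X (p + l0) k = ent X k (p + l0) :=
          (so_mix h0 k (p + l0) hk1 (by omega) (by omega) (by omega)).symm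
        have e2 : (a : ℕ) + 1 = p + l0 := by omega
        rw [e2, e1]; ring
      · intro l hl hne
        simp only [Finset.mem_Icc] at hl
        rw [if_neg (by omega), if_neg (by omega)]; ring
      · intro h; exact absurd (Finset.mem_Icc.mpr ⟨hl0r.1, hl0r.2⟩) h
    · -- p - q < a+1 ≤ p
      set l0 : ℕ := p + 1 - ((a : ℕ) + 1) with hl0
      have hl0r : 1 ≤ l0 ∧ l0 ≤ q := by omega
      have e2 : (a : ℕ) + 1 = p - l0 + 1 := by omega
      rw [Finset.sum_eq_single l0]
      · rw [if_pos (by omega), if_neg (by omega)]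
        have e1 : ent X (p - l0 + 1) k = - ent X k (p - l0 + 1) :=
          so_skew_p h0 (p - l0 + 1) k (by omega) (by omega) hk1 (by omega) (by omega)
        have e3 : ent X k (p - l0 + 1) = ent X k (p + l0) :=
          h3 k l0 hk1 hk2 hl0r.1 hl0r.2
        rw [e2, e1, e3]; ring
      · intro l hl hne
        simp only [Finset.mem_Icc] at hl
        rw [if_neg (by omega), if_neg (by omega)]; ring
      · intro h; exact absurd (Finset.mem_Icc.mpr ⟨hl0r.1, hl0r.2⟩) h

lemma lemB {p q : ℕ} (hq : 1 ≤ q) (hpq : q < p) {X : Matrix (Fin (p + q)) (Fin (p + q)) ℝ}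
    (hX : X ∈ nSet p q) (m : ℕ) (hm1 : 1 ≤ m) (hm2 : m ≤ q) :
    X *ᵥ wVec p q m = ∑ j ∈ Finset.Icc 1 q,
      (if j < m then -(ent X (p + 1 - m) (p + j) + ent X (p + 1 - j) (p + m)) else 0)
        • wVec p q j := by
  obtain ⟨h0, h1, h2, h3, h4, h5⟩ := hX
  funext a
  have hLHS : (X *ᵥ wVec p q m) a
      = ent X ((a : ℕ) + 1) (p - m + 1) - ent X ((a : ℕ) + 1) (p + m) := by
    rw [wVec, Matrix.mulVec_sub, Pi.sub_apply,
      mulVec_stdE X (p - m + 1) (by omega) (by omega) a,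
      mulVec_stdE X (p + m) (by omega) (by omega) a]
  rw [hLHS, Finset.sum_apply]
  simp only [Pi.smul_apply, smul_eq_mul, wVec_apply]
  have hpm : p - m + 1 = p + 1 - m := by omega
  rcases lt_or_ge ((a : ℕ) + 1) (p - q + 1) with hc | hc
  · -- a+1 ≤ p - q : LHS = 0 by h3
    rw [h3 ((a : ℕ) + 1) m (by omega) (by omega) hm1 hm2]
    rw [Finset.sum_eq_zero]
    · ring
    intro l hl
    simp only [Finset.mem_Icc] at hl
    have hw : (if (a : ℕ) + 1 = p - l + 1 then (1 : ℝ) else 0)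
        - (if (a : ℕ) + 1 = p + l then (1 : ℝ) else 0) = 0 := by
      rw [if_neg (by omega), if_neg (by omega)]; ring
    rw [hw, mul_zero]
  · rcases lt_or_ge (p : ℕ) ((a : ℕ) + 1) with hc2 | hc2
    · -- a + 1 = p + i
      have hil : (a : ℕ) < p + q := a.isLt
      set i : ℕ := (a : ℕ) + 1 - p with hi
      have hir : 1 ≤ i ∧ i ≤ q := by omega
      have ea : (a : ℕ) + 1 = p + i := by omega
      rw [ea]
      have eM : ent X (p + i) (p - m + 1) = ent X (p + 1 - m) (p + i) := by
        rw [hpm]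
        exact (so_mix h0 (p + 1 - m) (p + i) (by omega) (by omega) (by omega) (by omega)).symm
      rw [Finset.sum_eq_single i]
      · have hw : (if p + i = p - i + 1 then (1 : ℝ) else 0)
            - (if p + i = p + i then (1 : ℝ) else 0) = -1 := by
          rw [if_neg (by omega), if_pos rfl]; ring
        rw [hw]
        rcases lt_trichotomy i m with him | him | him
        · rw [if_pos him, eM, h5 i m hir.1 him hm2]
          ring
        · subst him
          have d0 : ent X (p + i) (p + i) = 0 := by
            have := so_skew_q h0 (p + i) (p + i) (by omega) (by omega) (by omega) (by omega)
            linarith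
          have b0 : ent X (p + 1 - i) (p + i) = 0 := by
            have := h2 i hir.1 hir.2
            rwa [hpm] at this
          rw [if_neg (by omega), eM, hpm] at *
          rw [d0, b0]
          ring
        · rw [if_neg (by omega), eM]
          have e5 : ent X (p + m) (p + i) = - ent X (p + 1 - m) (p + i) :=
            h5 m i hm1 him hir.2
          have e6 : ent X (p + i) (p + m) = - ent X (p + m) (p + i) :=
            so_skew_q h0 (p + i) (p + m) (by omega) (by omega) (by omega) (by omega)
          rw [e6, e5]
          ring
      · intro l hl hne
        simp only [Finset.mem_Icc] at hl
        have hw : (if p + i = p - l + 1 then (1 : ℝ) else 0)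
            - (if p + i = p + l then (1 : ℝ) else 0) = 0 := by
          rw [if_neg (by omega), if_neg (by omega)]; ring
        rw [hw, mul_zero]
      · intro h; exact absurd (Finset.mem_Icc.mpr ⟨hir.1, hir.2⟩) h
    · -- p - q < a + 1 ≤ p : a + 1 = p + 1 - j0
      set j0 : ℕ := p + 1 - ((a : ℕ) + 1) with hj0
      have hjr : 1 ≤ j0 ∧ j0 ≤ q := by omega
      have ea : (a : ℕ) + 1 = p + 1 - j0 := by omega
      rw [ea]
      rw [Finset.sum_eq_single j0]
      · have hw : (if p + 1 - j0 = p - j0 + 1 then (1 : ℝ) else 0)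
            - (if p + 1 - j0 = p + j0 then (1 : ℝ) else 0) = 1 := by
          rw [if_pos (by omega), if_neg (by omega)]; ring
        rw [hw]
        rcases lt_trichotomy j0 m with hjm | hjm | hjm
        · rw [if_pos hjm]
          have e1 : ent X (p + 1 - j0) (p + 1 - m) = - ent X (p + 1 - m) (p + 1 - j0) :=
            so_skew_p h0 (p + 1 - j0) (p + 1 - m) (by omega) (by omega) (by omega) (by omega)
              (by omega)
          have e2 : ent X (p + 1 - m) (p + 1 - j0) = ent X (p + 1 - m) (p + j0) :=
            h4 j0 m hjr.1 hjm hm2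
          rw [hpm, e1, e2]
          ring
        · subst hjm
          have d0 : ent X (p + 1 - j0) (p + 1 - j0) = 0 := by
            have := so_skew_p h0 (p + 1 - j0) (p + 1 - j0) (by omega) (by omega) (by omega)
              (by omega) (by omega)
            linarith
          have b0 : ent X (p + 1 - j0) (p + j0) = 0 := by
            have := h2 j0 hjr.1 hjr.2
            rwa [hpm] at this
          rw [if_neg (by omega), hpm, d0, b0]
          ring
        · rw [if_neg (by omega)]
          have e2 : ent X (p + 1 - j0) (p + 1 - m) = ent X (p + 1 - j0) (p + m) :=
            h4 m j0 hm1 hjm hjr.2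
          rw [hpm, e2]
          ring
      · intro l hl hne
        simp only [Finset.mem_Icc] at hl
        have hw : (if p + 1 - j0 = p - l + 1 then (1 : ℝ) else 0)
            - (if p + 1 - j0 = p + l then (1 : ℝ) else 0) = 0 := by
          rw [if_neg (by omega), if_neg (by omega)]; ring
        rw [hw, mul_zero]
      · intro h; exact absurd (Finset.mem_Icc.mpr ⟨hjr.1, hjr.2⟩) h

def Tset (p q r : ℕ) : Set (Fin (p + q) → ℝ) :=
  {x | ∃ s : ℕ → ℝ, x = ∑ j ∈ Finset.Icc 1 r, s j • wVec p q j}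

lemma Tset_zero {p q r : ℕ} : (0 : Fin (p + q) → ℝ) ∈ Tset p q r :=
  ⟨fun _ => 0, by simp⟩

lemma Tset_add {p q r : ℕ} {x y : Fin (p + q) → ℝ} (hx : x ∈ Tset p q r)
    (hy : y ∈ Tset p q r) : x + y ∈ Tset p q r := by
  obtain ⟨s, rfl⟩ := hx; obtain ⟨t, rfl⟩ := hy
  refine ⟨fun j => s j + t j, ?_⟩
  rw [← Finset.sum_add_distrib]
  refine Finset.sum_congr rfl fun j _ => ?_
  simp [add_smul]

lemma Tset_smul {p q r : ℕ} (c : ℝ) {x : Fin (p + q) → ℝ} (hx : x ∈ Tset p q r) :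
    c • x ∈ Tset p q r := by
  obtain ⟨s, rfl⟩ := hx
  refine ⟨fun j => c * s j, ?_⟩
  rw [Finset.smul_sum]
  refine Finset.sum_congr rfl fun j _ => ?_
  simp [smul_smul]

lemma Tset_mono {p q r r' : ℕ} (h : r ≤ r') : Tset p q r ⊆ Tset p q r' := by
  rintro x ⟨s, rfl⟩
  refine ⟨fun j => if j ≤ r then s j else 0, ?_⟩
  rw [← Finset.sum_subset (Finset.Icc_subset_Icc le_rfl h) (fun j hj hnj => ?_)]
  · refine Finset.sum_congr rfl fun j hj => ?_
    simp only []
    rw [if_pos (Finset.mem_Icc.mp hj).2]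
  · simp only []
    rw [if_neg, zero_smul]
    simp only [Finset.mem_Icc] at hj hnj; omega

lemma Tset_sum {p q r : ℕ} {ι : Type*} (F : Finset ι) (f : ι → (Fin (p + q) → ℝ))
    (h : ∀ i ∈ F, f i ∈ Tset p q r) : (∑ i ∈ F, f i) ∈ Tset p q r :=
  Finset.sum_induction f (· ∈ Tset p q r) (fun _ _ ha hb => Tset_add ha hb) Tset_zero h

lemma mulVec_wVec_mem {p q : ℕ} (hq : 1 ≤ q) (hpq : q < p)
    {X : Matrix (Fin (p + q)) (Fin (p + q)) ℝ} (hX : X ∈ nSet p q) {m : ℕ}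
    (hm1 : 1 ≤ m) (hm2 : m ≤ q) : X *ᵥ wVec p q m ∈ Tset p q (m - 1) := by
  refine ⟨fun j => if j < m then -(ent X (p + 1 - m) (p + j) + ent X (p + 1 - j) (p + m))
    else 0, ?_⟩
  rw [lemB hq hpq hX m hm1 hm2]
  rw [← Finset.sum_subset (Finset.Icc_subset_Icc le_rfl (by omega : m - 1 ≤ q))
    (fun l hl hnl => ?_)]
  rw [if_neg, zero_smul]
  simp only [Finset.mem_Icc] at hl hnl; omega

lemma mulVec_mem_Tset {p q : ℕ} (hq : 1 ≤ q) (hpq : q < p)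
    {X : Matrix (Fin (p + q)) (Fin (p + q)) ℝ} (hX : X ∈ nSet p q) {r : ℕ} (hr : r ≤ q)
    {x : Fin (p + q) → ℝ} (hx : x ∈ Tset p q r) : X *ᵥ x ∈ Tset p q (r - 1) := by
  obtain ⟨s, rfl⟩ := hx
  have e : X *ᵥ (∑ j ∈ Finset.Icc 1 r, s j • wVec p q j)
      = ∑ j ∈ Finset.Icc 1 r, s j • (X *ᵥ wVec p q j) := by
    simp only [← Matrix.mulVecLin_apply, map_sum, LinearMap.map_smul]
  rw [e]
  refine Tset_sum _ _ fun j hj => ?_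
  simp only [Finset.mem_Icc] at hj
  exact Tset_smul _ (Tset_mono (by omega) (mulVec_wVec_mem hq hpq hX hj.1 (by omega)))

lemma pow_kill {p q : ℕ} (hq : 1 ≤ q) (hpq : q < p)
    {X : Matrix (Fin (p + q)) (Fin (p + q)) ℝ} (hX : X ∈ nSet p q) :
    ∀ r, r ≤ q → ∀ x ∈ Tset p q r, X ^ r *ᵥ x = 0 := by
  intro r
  induction r with
  | zero =>
    rintro _ x ⟨s, rfl⟩
    rw [Finset.Icc_eq_empty (by omega)]
    simp
  | succ r ih =>
    intro hr x hx
    have h1 : X *ᵥ x ∈ Tset p q r := by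
      have := mulVec_mem_Tset hq hpq hX (r := r + 1) (by omega) hx
      simpa using this
    rw [pow_succ, ← Matrix.mulVec_mulVec]
    exact ih (by omega) _ h1

lemma pow_stable {p q : ℕ} (hq : 1 ≤ q) (hpq : q < p)
    {X : Matrix (Fin (p + q)) (Fin (p + q)) ℝ} (hX : X ∈ nSet p q) :
    ∀ n, ∀ x ∈ Tset p q q, X ^ n *ᵥ x ∈ Tset p q q := by
  intro n
  induction n with
  | zero => intro x hx; simpa using hx
  | succ n ih =>
    intro x hx
    rw [pow_succ, ← Matrix.mulVec_mulVec]
    exact ih _ (Tset_mono (by omega) (mulVec_mem_Tset hq hpq hX le_rfl hx))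

lemma exp_mulVec_eq {n : ℕ} (X : Matrix (Fin n) (Fin n) ℝ) (v : Fin n → ℝ) (m : ℕ)
    (h : X ^ m *ᵥ v = 0) :
    (NormedSpace.exp X) *ᵥ v
      = ∑ i ∈ Finset.range m, ((i.factorial : ℝ))⁻¹ • (X ^ i *ᵥ v) := by
  letI : SeminormedRing (Matrix (Fin n) (Fin n) ℝ) := Matrix.linftyOpSemiNormedRing
  letI : NormedRing (Matrix (Fin n) (Fin n) ℝ) := Matrix.linftyOpNormedRing
  letI : NormedAlgebra ℝ (Matrix (Fin n) (Fin n) ℝ) := Matrix.linftyOpNormedAlgebra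
  have hzero : ∀ i ∉ Finset.range m, ((i.factorial : ℝ))⁻¹ • (X ^ i *ᵥ v) = 0 := by
    intro i hi
    rw [Finset.mem_range, not_lt] at hi
    have h2 : X ^ i *ᵥ v = 0 := by
      have h3 : X ^ i = X ^ (i - m) * X ^ m := by rw [← pow_add]; congr 1; omega
      rw [h3, ← Matrix.mulVec_mulVec, h, Matrix.mulVec_zero]
    rw [h2, smul_zero]
  let L0 : Matrix (Fin n) (Fin n) ℝ →ₗ[ℝ] (Fin n → ℝ) :=
    { toFun := fun M => M *ᵥ v
      map_add' := fun A B => Matrix.add_mulVec A B v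
      map_smul' := fun c A => Matrix.smul_mulVec c A v }
  let L : Matrix (Fin n) (Fin n) ℝ →L[ℝ] (Fin n → ℝ) := ⟨L0, L0.continuous_of_finiteDimensional⟩
  have hsum : Summable (fun i : ℕ => ((i.factorial : ℝ))⁻¹ • X ^ i) :=
    NormedSpace.expSeries_summable' X
  have key : (NormedSpace.exp X) *ᵥ v = L (∑' i, ((i.factorial : ℝ))⁻¹ • X ^ i) := by
    rw [NormedSpace.exp_eq_tsum ℝ]; rfl
  have h4 : ∑' (i : ℕ), L (((i.factorial : ℝ))⁻¹ • X ^ i)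
      = ∑ i ∈ Finset.range m, L (((i.factorial : ℝ))⁻¹ • X ^ i) :=
    tsum_eq_sum (fun i hi => by rw [L.map_smul]; exact hzero i hi)
  rw [key, L.map_tsum hsum, h4]
  refine Finset.sum_congr rfl fun i _ => ?_
  rw [L.map_smul]
  rfl

def Sset (p q k : ℕ) : Set (Fin (p + q) → ℝ) :=
  {v | ∃ s : ℕ → ℝ, v = stdE (p + q) k + ∑ i ∈ Finset.Icc 1 q, s i • wVec p q i}

lemma Sset_iff {p q k : ℕ} {v : Fin (p + q) → ℝ} :
    v ∈ Sset p q k ↔ v - stdE (p + q) k ∈ Tset p q q := by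
  constructor
  · rintro ⟨s, rfl⟩; exact ⟨s, by abel⟩
  · rintro ⟨s, hs⟩; exact ⟨s, by rw [← hs]; abel⟩

lemma exp_mem_Sset {p q : ℕ} (hq : 1 ≤ q) (hpq : q < p) (k : ℕ) (hk1 : 1 ≤ k)
    (hk2 : k ≤ p - q) {X : Matrix (Fin (p + q)) (Fin (p + q)) ℝ} (hX : X ∈ nSet p q)
    {v : Fin (p + q) → ℝ} (hv : v ∈ Sset p q k) :
    NormedSpace.exp X *ᵥ v ∈ Sset p q k := by
  obtain ⟨s, rfl⟩ := hv
  set t := ∑ i ∈ Finset.Icc 1 q, s i • wVec p q i with ht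
  have htT : t ∈ Tset p q q := ⟨s, rfl⟩
  have hek : X *ᵥ stdE (p + q) k ∈ Tset p q q :=
    ⟨fun l => - ent X k (p + l), lemA hq hpq hX k hk1 hk2⟩
  have hXv : X *ᵥ (stdE (p + q) k + t) ∈ Tset p q q := by
    rw [Matrix.mulVec_add]
    exact Tset_add hek (Tset_mono (by omega) (mulVec_mem_Tset hq hpq hX le_rfl htT))
  have hkill : X ^ (q + 1) *ᵥ (stdE (p + q) k + t) = 0 := by
    rw [pow_succ, ← Matrix.mulVec_mulVec]
    exact pow_kill hq hpq hX q le_rfl _ hXv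
  rw [exp_mulVec_eq X _ (q + 1) hkill, Finset.sum_range_succ']
  have h0 : ((Nat.factorial 0 : ℝ))⁻¹ • (X ^ 0 *ᵥ (stdE (p + q) k + t))
      = stdE (p + q) k + t := by
    simp [Matrix.one_mulVec]
  rw [h0]
  rw [Sset_iff]
  have : ∑ i ∈ Finset.range q, ((Nat.factorial (i + 1) : ℝ))⁻¹
      • (X ^ (i + 1) *ᵥ (stdE (p + q) k + t)) + (stdE (p + q) k + t) - stdE (p + q) k
      = ∑ i ∈ Finset.range q, ((Nat.factorial (i + 1) : ℝ))⁻¹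
      • (X ^ (i + 1) *ᵥ (stdE (p + q) k + t)) + t := by abel
  rw [this]
  refine Tset_add (Tset_sum _ _ fun i _ => Tset_smul _ ?_) htT
  have : X ^ (i + 1) *ᵥ (stdE (p + q) k + t) = X ^ i *ᵥ (X *ᵥ (stdE (p + q) k + t)) := by
    rw [Matrix.mulVec_mulVec, ← pow_succ]
  rw [this]
  exact pow_stable hq hpq hX i _ hXv

lemma neg_mem_nSet {p q : ℕ} {X : Matrix (Fin (p + q)) (Fin (p + q)) ℝ}
    (hX : X ∈ nSet p q) : -X ∈ nSet p q := by
  have h : X ∈ nSub p q := hX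
  have := (nSub p q).neg_mem h
  exact this

lemma expUnit_inv_coe {n : ℕ} (X : Matrix (Fin n) (Fin n) ℝ) :
    (((expUnit X)⁻¹ : (Matrix (Fin n) (Fin n) ℝ)ˣ) : Matrix (Fin n) (Fin n) ℝ)
      = NormedSpace.exp (-X) := rfl

lemma Ngrp_maps {p q : ℕ} (hq : 1 ≤ q) (hpq : q < p) (k : ℕ) (hk1 : 1 ≤ k)
    (hk2 : k ≤ p - q) {g : (Matrix (Fin (p + q)) (Fin (p + q)) ℝ)ˣ} (hg : g ∈ Ngrp p q) :
    ∀ v ∈ Sset p q k, (g : Matrix (Fin (p + q)) (Fin (p + q)) ℝ) *ᵥ v ∈ Sset p q k := by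
  have main : (∀ v ∈ Sset p q k, (g : Matrix (Fin (p + q)) (Fin (p + q)) ℝ) *ᵥ v ∈ Sset p q k)
      ∧ (∀ v ∈ Sset p q k,
          ((g⁻¹ : (Matrix (Fin (p + q)) (Fin (p + q)) ℝ)ˣ) : Matrix (Fin (p + q)) (Fin (p + q)) ℝ)
            *ᵥ v ∈ Sset p q k) := by
    refine Subgroup.closure_induction (k := {g | ∃ X ∈ nSet p q, g = expUnit X})
      (fun x hx => ?_) ?_ (fun x y hx hy ihx ihy => ?_) (fun x hx ih => ?_) hg
    · obtain ⟨X, hXmem, rfl⟩ := hx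
      constructor
      · intro v hv
        exact exp_mem_Sset hq hpq k hk1 hk2 hXmem hv
      · intro v hv
        rw [expUnit_inv_coe]
        exact exp_mem_Sset hq hpq k hk1 hk2 (neg_mem_nSet hXmem) hv
    · constructor <;> intro v hv <;> simpa [Matrix.one_mulVec] using hv
    · constructor
      · intro v hv
        rw [Units.val_mul, ← Matrix.mulVec_mulVec]
        exact ihx.1 _ (ihy.1 _ hv)
      · intro v hv
        rw [_root_.mul_inv_rev, Units.val_mul, ← Matrix.mulVec_mulVec]
        exact ihy.2 _ (ihx.2 _ hv)
    · exact ⟨ih.2, by simpa using ih.1⟩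
  exact main.1

def Xmat (p q k : ℕ) (s : ℕ → ℝ) : Matrix (Fin (p + q)) (Fin (p + q)) ℝ :=
  fun a b =>
    if (a : ℕ) + 1 = k ∧ p - q < (b : ℕ) + 1 ∧ (b : ℕ) + 1 ≤ p then -s (p + 1 - ((b : ℕ) + 1))
    else if (a : ℕ) + 1 = k ∧ p < (b : ℕ) + 1 then -s ((b : ℕ) + 1 - p)
    else if (b : ℕ) + 1 = k ∧ p - q < (a : ℕ) + 1 ∧ (a : ℕ) + 1 ≤ p then s (p + 1 - ((a : ℕ) + 1))
    else if (b : ℕ) + 1 = k ∧ p < (a : ℕ) + 1 then -s ((a : ℕ) + 1 - p)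
    else 0

lemma ent_Xmat {p q : ℕ} (k : ℕ) (s : ℕ → ℝ) (i j : ℕ)
    (hi1 : 1 ≤ i) (hi2 : i ≤ p + q) (hj1 : 1 ≤ j) (hj2 : j ≤ p + q) :
    ent (Xmat p q k s) i j =
      if i = k ∧ p - q < j ∧ j ≤ p then -s (p + 1 - j)
      else if i = k ∧ p < j then -s (j - p)
      else if j = k ∧ p - q < i ∧ i ≤ p then s (p + 1 - i)
      else if j = k ∧ p < i then -s (i - p)
      else 0 := by
  have hi : i - 1 < p + q := by omega
  have hj : j - 1 < p + q := by omega
  rw [ent, dif_pos ⟨hi, hj⟩]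
  show (if i - 1 + 1 = k ∧ p - q < j - 1 + 1 ∧ j - 1 + 1 ≤ p then -s (p + 1 - (j - 1 + 1))
      else if i - 1 + 1 = k ∧ p < j - 1 + 1 then -s (j - 1 + 1 - p)
      else if j - 1 + 1 = k ∧ p - q < i - 1 + 1 ∧ i - 1 + 1 ≤ p then s (p + 1 - (i - 1 + 1))
      else if j - 1 + 1 = k ∧ p < i - 1 + 1 then -s (i - 1 + 1 - p)
      else 0) = _
  rw [Nat.sub_add_cancel hi1, Nat.sub_add_cancel hj1]

set_option maxHeartbeats 2000000 in
lemma Xmat_mem_nSet {p q : ℕ} (hq : 1 ≤ q) (hpq : q < p) (k : ℕ) (hk1 : 1 ≤ k)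
    (hk2 : k ≤ p - q) (s : ℕ → ℝ) : Xmat p q k s ∈ nSet p q := by
  have hso : Xmat p q k s ∈ soSet p q := by
    show _ = _
    ext a b
    simp only [Matrix.add_apply, Jmat, Matrix.mul_diagonal, Matrix.diagonal_mul,
      Matrix.transpose_apply, Matrix.zero_apply, Xmat]
    have ha := a.isLt
    have hb := b.isLt
    split_ifs <;> first | ring1 | (exfalso; omega)
  refine ⟨hso, ?_, ?_, ?_, ?_, ?_⟩
  · intro i j hi1 hi2 hj1 hj2
    rw [ent_Xmat k s i j (by omega) (by omega) (by omega) (by omega)]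
    split_ifs <;> first | rfl | (exfalso; omega)
  · intro l hl1 hl2
    rw [ent_Xmat k s _ _ (by omega) (by omega) (by omega) (by omega)]
    split_ifs <;> first | rfl | (exfalso; omega)
  · intro k' l hk'1 hk'2 hl1 hl2
    rw [ent_Xmat k s _ _ (by omega) (by omega) (by omega) (by omega),
      ent_Xmat k s _ _ (by omega) (by omega) (by omega) (by omega)]
    split_ifs <;> first | rfl | (exfalso; omega) | (congr 2; omega)
  · intro i j hi1 hij hj2
    rw [ent_Xmat k s _ _ (by omega) (by omega) (by omega) (by omega),
      ent_Xmat k s _ _ (by omega) (by omega) (by omega) (by omega)]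
    split_ifs <;> first | rfl | (exfalso; omega) | (congr 2; omega)
  · intro i j hi1 hij hj2
    rw [ent_Xmat k s _ _ (by omega) (by omega) (by omega) (by omega),
      ent_Xmat k s _ _ (by omega) (by omega) (by omega) (by omega)]
    split_ifs <;> first | (exfalso; omega) | (congr 2; omega) | simp

lemma exp_Xmat_mulVec {p q : ℕ} (hq : 1 ≤ q) (hpq : q < p) (k : ℕ) (hk1 : 1 ≤ k)
    (hk2 : k ≤ p - q) (s : ℕ → ℝ) :
    NormedSpace.exp (Xmat p q k s) *ᵥ stdE (p + q) k
      = stdE (p + q) k + ∑ l ∈ Finset.Icc 1 q, s l • wVec p q l := by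
  have hXmem := Xmat_mem_nSet hq hpq k hk1 hk2 s
  have hB : ∀ l, 1 ≤ l → l ≤ q → ent (Xmat p q k s) k (p + l) = -s l := by
    intro l hl1 hl2
    rw [ent_Xmat k s k (p + l) (by omega) (by omega) (by omega) (by omega),
      if_neg (show ¬(k = k ∧ p - q < p + l ∧ p + l ≤ p) by omega),
      if_pos (show k = k ∧ p < p + l from ⟨rfl, by omega⟩),
      show p + l - p = l by omega]
  have hA : Xmat p q k s *ᵥ stdE (p + q) k = ∑ l ∈ Finset.Icc 1 q, s l • wVec p q l := by
    rw [lemA hq hpq hXmem k hk1 hk2]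
    refine Finset.sum_congr rfl fun l hl => ?_
    simp only [Finset.mem_Icc] at hl
    rw [hB l hl.1 hl.2, neg_neg]
  have hRow0 : ∀ i j, p - q < i → i ≤ p + q → p < j → j ≤ p + q →
      ent (Xmat p q k s) i j = 0 := by
    intro i j hi1 hi2 hj1 hj2
    rw [ent_Xmat k s i j (by omega) (by omega) (by omega) (by omega)]
    split_ifs <;> first | (exfalso; omega) | rfl
  have hw0 : ∀ m, 1 ≤ m → m ≤ q → Xmat p q k s *ᵥ wVec p q m = 0 := by
    intro m hm1 hm2
    rw [lemB hq hpq hXmem m hm1 hm2]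
    refine Finset.sum_eq_zero fun j hj => ?_
    simp only [Finset.mem_Icc] at hj
    split_ifs with h
    · rw [hRow0 (p + 1 - m) (p + j) (by omega) (by omega) (by omega) (by omega),
        hRow0 (p + 1 - j) (p + m) (by omega) (by omega) (by omega) (by omega)]
      simp
    · simp
  have h2 : Xmat p q k s ^ 2 *ᵥ stdE (p + q) k = 0 := by
    rw [sq, ← Matrix.mulVec_mulVec, hA]
    have e : Xmat p q k s *ᵥ (∑ l ∈ Finset.Icc 1 q, s l • wVec p q l)
        = ∑ l ∈ Finset.Icc 1 q, s l • (Xmat p q k s *ᵥ wVec p q l) := by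
      simp only [← Matrix.mulVecLin_apply, map_sum, LinearMap.map_smul]
    rw [e]
    refine Finset.sum_eq_zero fun l hl => ?_
    simp only [Finset.mem_Icc] at hl
    rw [hw0 l hl.1 hl.2, smul_zero]
  rw [exp_mulVec_eq _ _ 2 h2, Finset.sum_range_succ, Finset.sum_range_one]
  simp [hA, Matrix.one_mulVec]

end Aux

/-- Assume `p > q`. For every `1 ≤ k ≤ p-q`, the `N`-orbit of `e_k` is
`N(e_k) = {e_k + s_1 w_1 + ⋯ + s_q w_q : s_i ∈ ℝ}`. -/
theorem Ngrp_orbit_e (p q : ℕ) (hq : 1 ≤ q) (hpq : q < p)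
    (k : ℕ) (hk1 : 1 ≤ k) (hk2 : k ≤ p - q) :
    orb (Ngrp p q) (stdE (p + q) k)
      = {v | ∃ s : ℕ → ℝ,
          v = stdE (p + q) k + ∑ i ∈ Finset.Icc 1 q, s i • wVec p q i} := by
  ext v
  constructor
  · rintro ⟨g, hg, rfl⟩
    have he : stdE (p + q) k ∈ Sset p q k := ⟨fun _ => 0, by simp⟩
    exact Ngrp_maps hq hpq k hk1 hk2 hg _ he
  · rintro ⟨s, rfl⟩
    exact ⟨expUnit (Xmat p q k s),
      Subgroup.subset_closure ⟨Xmat p q k s, Xmat_mem_nSet hq hpq k hk1 hk2 s, rfl⟩,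
      exp_Xmat_mulVec hq hpq k hk1 hk2 s⟩
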